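/- Let p ≥ 1 and let κ_r > 0, a_r > 0 and d_r ≥ 0 for r = 1, …, p with max_r d_r > 0, and let σ² > 0 and n > 0 be real numbers. Define U(λ) = Σ_{r=1}^{p} (σ² a_r κ_r² + n λ² d_r) / (n (κ_r + λ)²) for λ ≥ 0 and set λ₀ = (σ²/n) · (min_{r} κ_r a_r) / (max_{r} d_r). Then U is strictly decreasing on [0, λ₀]; in particular U(λ) < U(0) = (σ²/n) Σ_{r=1}^{p} a_r for every λ ∈ (0, λ₀]. -/

import Mathlib

/-- The mean-squared-error upper bound
`U(λ) = Σ_r (σ² a_r κ_r² + n λ² d_r)/(n (κ_r + λ)²)` is strictly decreasing on `[0, λ₀]` with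
`λ₀ = (σ²/n)·(min_r κ_r a_r)/(max_r d_r)`; in particular `U(λ) < U(0) = (σ²/n) Σ_r a_r` for all
`λ ∈ (0, λ₀]`. -/
theorem mse_upper_bound_strictAntiOn
    (p : ℕ) (hp : 1 ≤ p) (κ a d : Fin p → ℝ)
    (hκ : ∀ r, 0 < κ r) (ha : ∀ r, 0 < a r) (hd : ∀ r, 0 ≤ d r)
    (σ2 n : ℝ) (hσ2 : 0 < σ2) (hn : 0 < n)
    (mn mx : ℝ)
    (hmn : IsLeast (Set.range fun r => κ r * a r) mn)
    (hmx : IsGreatest (Set.range d) mx) (hmxpos : 0 < mx)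
    (U : ℝ → ℝ)
    (hU : ∀ l : ℝ, U l =
      ∑ r : Fin p, (σ2 * a r * κ r ^ 2 + n * l ^ 2 * d r) / (n * (κ r + l) ^ 2))
    (lam₀ : ℝ) (hlam₀ : lam₀ = σ2 / n * (mn / mx)) :
    StrictAntiOn U (Set.Icc 0 lam₀) ∧
      (∀ l ∈ Set.Ioc 0 lam₀, U l < U 0) ∧
      U 0 = σ2 / n * ∑ r : Fin p, a r := by
  have hmn_le : ∀ r, mn ≤ κ r * a r := fun r => hmn.2 ⟨r, rfl⟩
  have hmx_ge : ∀ r, d r ≤ mx := fun r => hmx.2 ⟨r, rfl⟩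
  have hne : Nonempty (Fin p) := Fin.pos_iff_nonempty.mp hp
  have hmain : ∀ x y : ℝ, 0 ≤ x → x < y → y ≤ lam₀ → U y < U x := by
    intro x y hx hxy hyl
    rw [hU, hU]
    apply Finset.sum_lt_sum_of_nonempty Finset.univ_nonempty
    intro r _
    have hκr := hκ r; have har := ha r; have hdr := hd r
    have hy0 : 0 < y := lt_of_le_of_lt hx hxy
    have hlam : n * mx * lam₀ = σ2 * mn := by
      rw [hlam₀]; field_simp
    have hkey : n * d r * y ≤ σ2 * a r * κ r := by
      calc n * d r * y ≤ n * mx * y := by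
            nlinarith [mul_nonneg (mul_nonneg hn.le hy0.le) (sub_nonneg.2 (hmx_ge r))]
        _ ≤ n * mx * lam₀ := by
            nlinarith [mul_nonneg (mul_nonneg hn.le hmxpos.le) (sub_nonneg.2 hyl)]
        _ = σ2 * mn := hlam
        _ ≤ σ2 * (κ r * a r) := by nlinarith [hmn_le r]
        _ = σ2 * a r * κ r := by ring
    have hkeyx : n * d r * x < σ2 * a r * κ r := by
      rcases hdr.eq_or_lt with h | h
      · rw [← h]; simpa using mul_pos (mul_pos hσ2 har) hκr
      · nlinarith [mul_pos (mul_pos hn h) (sub_pos.2 hxy)]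
    rw [div_lt_div_iff₀ (by positivity) (by positivity)]
    have hB : 0 < (σ2 * a r * κ r - n * d r * x) * (κ r + y)
        + (σ2 * a r * κ r - n * d r * y) * (κ r + x) := by nlinarith
    have hprod := mul_pos (mul_pos (mul_pos hn (sub_pos.2 hxy)) hκr) hB
    nlinarith [hprod]
  refine ⟨?_, ?_, ?_⟩
  · intro x hxm y hym hxy
    exact hmain x y hxm.1 hxy hym.2
  · intro l hl
    exact hmain 0 l le_rfl hl.1 hl.2
  · rw [hU, Finset.mul_sum]
    refine Finset.sum_congr rfl fun r _ => ?_
    have h1 : κ r ≠ 0 := (hκ r).ne'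
    have h2 : n ≠ 0 := hn.ne'
    field_simp
    ring_nf
    field_simp
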